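/- Let c ∈ ℂ and let R = ℂ[∂]L be the left-symmetric conformal algebra which is free of rank one as a ℂ[∂]-module, with λ-product determined by L_λ L = (λ + ∂ + c)L. Then every conformal derivation of R is zero: if D_λ : R → R[λ] is a conformal linear map satisfying D_λ(a_μ b) = D_λ(a)_{λ+μ} b + a_μ(D_λ(b)) for all a, b ∈ R, then D = 0. -/

import Mathlib

open Finsupp Polynomial

noncomputable section

/-- One-variable conformal polynomials in λ with coefficients in `W`:
the coefficient of `λ^n` sits at index `n`. -/
abbrev OP (W : Type*) [Zero W] := ℕ →₀ W

/-- Two-variable conformal polynomials in λ, μ with coefficients in `W`. -/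
abbrev TP (W : Type*) [Zero W] := (ℕ × ℕ) →₀ W

section Defs

variable {U V W L : Type*}
variable [AddCommGroup U] [Module ℂ U] [AddCommGroup V] [Module ℂ V]
variable [AddCommGroup W] [Module ℂ W] [AddCommGroup L] [Module ℂ L]

/-- Multiplication by the variable λ on one-variable polynomials. -/
def lsh : OP W →ₗ[ℂ] OP W := Finsupp.lmapDomain W ℂ (· + 1)

/-- Multiplication by λ on two-variable polynomials. -/
def LX : TP W →ₗ[ℂ] TP W := Finsupp.lmapDomain W ℂ (fun p => (p.1 + 1, p.2))

/-- Multiplication by μ on two-variable polynomials. -/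
def LY : TP W →ₗ[ℂ] TP W := Finsupp.lmapDomain W ℂ (fun p => (p.1, p.2 + 1))

/-- Coefficientwise action of ∂ on one-variable polynomials. -/
def pD (dW : W →ₗ[ℂ] W) : OP W →ₗ[ℂ] OP W := Finsupp.mapRange.linearMap dW

/-- Coefficientwise action of ∂ on two-variable polynomials. -/
def PD (dW : W →ₗ[ℂ] W) : TP W →ₗ[ℂ] TP W := Finsupp.mapRange.linearMap dW

/-- The operator −λ−∂ on one-variable polynomials. -/
def nD (dW : W →ₗ[ℂ] W) : OP W →ₗ[ℂ] OP W := -lsh - pD dW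

/-- The operator −λ−∂ on two-variable polynomials. -/
def nX (dW : W →ₗ[ℂ] W) : TP W →ₗ[ℂ] TP W := -LX - PD dW

/-- The operator −μ−∂ on two-variable polynomials. -/
def nY (dW : W →ₗ[ℂ] W) : TP W →ₗ[ℂ] TP W := -LY - PD dW

/-- The operator −λ−μ−∂ on two-variable polynomials. -/
def nXY (dW : W →ₗ[ℂ] W) : TP W →ₗ[ℂ] TP W := -LX - LY - PD dW

/-- Substitution of a (commuting) operator `A` for the variable of a one-variable
polynomial, with values in two-variable polynomials. -/
def evA (A : TP W →ₗ[ℂ] TP W) : OP W →ₗ[ℂ] TP W :=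
  Finsupp.lsum ℂ (fun k => (A ^ k) ∘ₗ Finsupp.lsingle ((0, 0) : ℕ × ℕ))

/-- Substitution of an operator `A` for the variable of a one-variable polynomial. -/
def evA1 (A : OP W →ₗ[ℂ] OP W) : OP W →ₗ[ℂ] OP W :=
  Finsupp.lsum ℂ (fun k => (A ^ k) ∘ₗ Finsupp.lsingle (0 : ℕ))

/-- `u_A v`: the pairing `m` evaluated with the variable replaced by the operator `A`. -/
def ev2 (m : U →ₗ[ℂ] V →ₗ[ℂ] OP W) (A : TP W →ₗ[ℂ] TP W) (u : U) (v : V) : TP W :=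
  evA A (m u v)

/-- Extension of the pairing `m`, in its first argument, to two-variable polynomials. -/
def exL (m : U →ₗ[ℂ] V →ₗ[ℂ] OP W) (A : TP W →ₗ[ℂ] TP W) (p : TP U) (v : V) : TP W :=
  Finsupp.sum p fun ij u => (LX ^ ij.1) ((LY ^ ij.2) (evA A (m u v)))

/-- Extension of the pairing `m`, in its second argument, to two-variable polynomials. -/
def exR (m : U →ₗ[ℂ] V →ₗ[ℂ] OP W) (A : TP W →ₗ[ℂ] TP W) (u : U) (p : TP V) : TP W :=
  Finsupp.sum p fun ij v => (LX ^ ij.1) ((LY ^ ij.2) (evA A (m u v)))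

/-- Extension of a unary conformal-linear map to two-variable polynomials. -/
def exU (D : U →ₗ[ℂ] OP W) (A : TP W →ₗ[ℂ] TP W) (p : TP U) : TP W :=
  Finsupp.sum p fun ij u => (LX ^ ij.1) ((LY ^ ij.2) (evA A (D u)))

/-- Coefficientwise application of a linear map to a one-variable polynomial. -/
def pMap (f : U →ₗ[ℂ] W) : OP U →ₗ[ℂ] OP W := Finsupp.mapRange.linearMap f

/-- A conformal bilinear map: `f(∂u, v) = −λ f(u,v)` and `f(u, ∂v) = (λ+∂) f(u,v)`. -/
structure ConfBilin (dU : U →ₗ[ℂ] U) (dV : V →ₗ[ℂ] V) (dW : W →ₗ[ℂ] W)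
    (m : U →ₗ[ℂ] V →ₗ[ℂ] OP W) : Prop where
  dleft : ∀ u v, m (dU u) v = -lsh (m u v)
  dright : ∀ u v, m u (dV v) = lsh (m u v) + pD dW (m u v)

/-- A left-symmetric conformal algebra structure on the ℂ[∂]-module `(L, dL)`. -/
structure IsLSCA (dL : L →ₗ[ℂ] L) (m : L →ₗ[ℂ] L →ₗ[ℂ] OP L) : Prop where
  conf : ConfBilin dL dL dL m
  lsym : ∀ a b c : L,
    exL m (LX + LY) (ev2 m LX a b) c - exR m LX a (ev2 m LY b c)
      = exL m (LX + LY) (ev2 m LY b a) c - exR m LY b (ev2 m LX a c)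

/-- The commutator λ-bracket `[u_λ v] = u_λ v − v_{−λ−∂} u`. -/
def commut (dL : L →ₗ[ℂ] L) (m : L →ₗ[ℂ] L →ₗ[ℂ] OP L) : L →ₗ[ℂ] L →ₗ[ℂ] OP L :=
  m - (m.compr₂ (evA1 (nD dL))).flip

/-- A Lie conformal algebra structure on the ℂ[∂]-module `(L, dL)`. -/
structure IsLieCA (dL : L →ₗ[ℂ] L) (br : L →ₗ[ℂ] L →ₗ[ℂ] OP L) : Prop where
  dleft : ∀ u v, br (dL u) v = -lsh (br u v)
  dright : ∀ u v, br u (dL v) = lsh (br u v) + pD dL (br u v)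
  skew : ∀ u v, br u v = -evA1 (nD dL) (br v u)
  jacobi : ∀ a b c : L,
    exR br LX a (ev2 br LY b c)
      = exL br (LX + LY) (ev2 br LX a b) c + exR br LY b (ev2 br LX a c)

end Defs

section Ext

variable {R Q : Type*} [AddCommGroup R] [Module ℂ R] [AddCommGroup Q] [Module ℂ Q]

/-- An extending datum of a left-symmetric conformal algebra `R` by a ℂ[∂]-module `Q`. -/
structure ExtDatum (dR : R →ₗ[ℂ] R) (dQ : Q →ₗ[ℂ] Q) where
  phi : Q →ₗ[ℂ] R →ₗ[ℂ] OP R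
  psi : Q →ₗ[ℂ] R →ₗ[ℂ] OP R
  l : R →ₗ[ℂ] Q →ₗ[ℂ] OP Q
  r : R →ₗ[ℂ] Q →ₗ[ℂ] OP Q
  g : Q →ₗ[ℂ] Q →ₗ[ℂ] OP R
  o : Q →ₗ[ℂ] Q →ₗ[ℂ] OP Q
  hphi : ConfBilin dQ dR dR phi
  hpsi : ConfBilin dQ dR dR psi
  hl : ConfBilin dR dQ dQ l
  hr : ConfBilin dR dQ dQ r
  hg : ConfBilin dQ dQ dR g
  ho : ConfBilin dQ dQ dQ o

/-- Embedding of `R`-valued polynomials into `(R ⊕ Q)`-valued polynomials. -/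
def inlP (R Q : Type*) [AddCommGroup R] [Module ℂ R] [AddCommGroup Q] [Module ℂ Q] :
    OP R →ₗ[ℂ] OP (R × Q) := Finsupp.mapRange.linearMap (LinearMap.inl ℂ R Q)

/-- Embedding of `Q`-valued polynomials into `(R ⊕ Q)`-valued polynomials. -/
def inrP (R Q : Type*) [AddCommGroup R] [Module ℂ R] [AddCommGroup Q] [Module ℂ Q] :
    OP Q →ₗ[ℂ] OP (R × Q) := Finsupp.mapRange.linearMap (LinearMap.inr ℂ R Q)

/-- The λ-product of the unified product `R ♮ Q`:
`(a+x) _λ (b+y) = (a_λ b + φ(x)_λ b + ψ(y)_{−λ−∂} a + g_λ(x,y)) + (x∘_λ y + l(a)_λ y + r(b)_{−λ−∂} x)`. -/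
def uprod (dR : R →ₗ[ℂ] R) (dQ : Q →ₗ[ℂ] Q) (Ω : ExtDatum dR dQ)
    (m : R →ₗ[ℂ] R →ₗ[ℂ] OP R) :
    (R × Q) →ₗ[ℂ] (R × Q) →ₗ[ℂ] OP (R × Q) :=
  ((m.compl₁₂ (LinearMap.fst ℂ R Q) (LinearMap.fst ℂ R Q)).compr₂ (inlP R Q))
    + ((Ω.phi.compl₁₂ (LinearMap.snd ℂ R Q) (LinearMap.fst ℂ R Q)).compr₂ (inlP R Q))
    + (((Ω.psi.compl₁₂ (LinearMap.snd ℂ R Q) (LinearMap.fst ℂ R Q)).compr₂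
        (inlP R Q ∘ₗ evA1 (nD dR))).flip)
    + ((Ω.g.compl₁₂ (LinearMap.snd ℂ R Q) (LinearMap.snd ℂ R Q)).compr₂ (inlP R Q))
    + ((Ω.o.compl₁₂ (LinearMap.snd ℂ R Q) (LinearMap.snd ℂ R Q)).compr₂ (inrP R Q))
    + ((Ω.l.compl₁₂ (LinearMap.fst ℂ R Q) (LinearMap.snd ℂ R Q)).compr₂ (inrP R Q))
    + (((Ω.r.compl₁₂ (LinearMap.fst ℂ R Q) (LinearMap.snd ℂ R Q)).compr₂
        (inrP R Q ∘ₗ evA1 (nD dQ))).flip)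

lemma uprod_apply (dR : R →ₗ[ℂ] R) (dQ : Q →ₗ[ℂ] Q) (Ω : ExtDatum dR dQ)
    (m : R →ₗ[ℂ] R →ₗ[ℂ] OP R) (e₁ e₂ : R × Q) :
    uprod dR dQ Ω m e₁ e₂ =
      inlP R Q (m e₁.1 e₂.1 + Ω.phi e₁.2 e₂.1 + evA1 (nD dR) (Ω.psi e₂.2 e₁.1) + Ω.g e₁.2 e₂.2)
      + inrP R Q (Ω.o e₁.2 e₂.2 + Ω.l e₁.1 e₂.2 + evA1 (nD dQ) (Ω.r e₂.1 e₁.2)) := by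
  simp [uprod, LinearMap.add_apply, LinearMap.compr₂_apply, LinearMap.compl₁₂_apply,
    LinearMap.flip_apply, map_add, LinearMap.comp_apply]
  abel

lemma uprod_res (dR : R →ₗ[ℂ] R) (dQ : Q →ₗ[ℂ] Q) (Ω : ExtDatum dR dQ)
    (m : R →ₗ[ℂ] R →ₗ[ℂ] OP R) (a b : R) :
    uprod dR dQ Ω m (a, (0 : Q)) (b, 0) = inlP R Q (m a b) := by
  rw [uprod_apply]
  simp

/-- Isomorphism property of left-symmetric conformal algebra structures, via
a ℂ[∂]-module automorphism `T` of the underlying module `E`. -/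
structure IsIsoLSCA {E : Type*} [AddCommGroup E] [Module ℂ E] (dE : E →ₗ[ℂ] E)
    (m₁ m₂ : E →ₗ[ℂ] E →ₗ[ℂ] OP E) (T : E ≃ₗ[ℂ] E) : Prop where
  dcomm : ∀ e, T (dE e) = dE (T e)
  mult : ∀ u v, m₂ (T u) (T v) = pMap (T : E →ₗ[ℂ] E) (m₁ u v)

/-- `T` stabilizes `R`, i.e. `T ∘ i = i` for the inclusion `i : R → R ⊕ Q`. -/
def Stab (T : (R × Q) ≃ₗ[ℂ] (R × Q)) : Prop := ∀ a : R, T (a, 0) = (a, 0)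

/-- `T` co-stabilizes `Q`, i.e. `π ∘ T = π` for the projection `π : R ⊕ Q → Q`. -/
def Costab (T : (R × Q) ≃ₗ[ℂ] (R × Q)) : Prop := ∀ e, (T e).2 = e.2

end Ext

/-- ∂ on ℂ[∂] = `Polynomial ℂ`: multiplication by `X`. -/
def dC : Polynomial ℂ →ₗ[ℂ] Polynomial ℂ := LinearMap.mulLeft ℂ (Polynomial.X : Polynomial ℂ)

section VanishAux

variable {M N : Type*} [AddCommGroup M] [Module ℂ M] [AddCommGroup N] [Module ℂ N]
variable {W : Type*} [AddCommGroup W] [Module ℂ W]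

lemma end_pow_apply (A : Module.End ℂ M) (n : ℕ) (v : M) :
    (A ^ (n + 1)) v = A ((A ^ n) v) := by
  rw [pow_succ']; rfl

lemma aeval_intertwine (g : M →ₗ[ℂ] N) (A : Module.End ℂ M) (B : Module.End ℂ N)
    (h : ∀ v, g (A v) = B (g v)) (P : Polynomial ℂ) (v : M) :
    g ((aeval A P) v) = (aeval B P) (g v) := by
  have hpow : ∀ (n : ℕ) (v : M), g ((A ^ n) v) = (B ^ n) (g v) := by
    intro n
    induction n with
    | zero => intro v; simp
    | succ n ih =>
        intro v
        rw [end_pow_apply, end_pow_apply, ← ih, h]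
  induction P using Polynomial.induction_on' with
  | add p q hp hq => simp [hp, hq]
  | monomial n a =>
      simp only [aeval_monomial, Module.End.mul_apply, Module.algebraMap_end_apply,
        map_smul, hpow]

lemma aeval_mul_intertwine {T : Type*} [CommRing T] [Algebra ℂ T] (g : M →ₗ[ℂ] T)
    (A : Module.End ℂ M) (s : T) (h : ∀ v, g (A v) = s * g v) (P : Polynomial ℂ) (v : M) :
    g ((aeval A P) v) = aeval s P * g v := by
  calc g ((aeval A P) v) = (aeval ((Algebra.lmul ℂ T) s) P) (g v) :=
        aeval_intertwine g A ((Algebra.lmul ℂ T) s) (fun w => h w) P v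
    _ = ((Algebra.lmul ℂ T) (aeval s P)) (g v) := by rw [Polynomial.aeval_algHom_apply]
    _ = aeval s P * g v := rfl

lemma LX_single (i j : ℕ) (w : W) :
    (LX : TP W →ₗ[ℂ] TP W) (single (i, j) w) = single (i + 1, j) w := by
  simp [LX, Finsupp.lmapDomain_apply, Finsupp.mapDomain_single]

lemma LY_single (i j : ℕ) (w : W) :
    (LY : TP W →ₗ[ℂ] TP W) (single (i, j) w) = single (i, j + 1) w := by
  simp [LY, Finsupp.lmapDomain_apply, Finsupp.mapDomain_single]

lemma lsh_single (k : ℕ) (w : W) :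
    (lsh : OP W →ₗ[ℂ] OP W) (single k w) = single (k + 1) w := by
  simp [lsh, Finsupp.lmapDomain_apply, Finsupp.mapDomain_single]

lemma pD_single (dW : W →ₗ[ℂ] W) (k : ℕ) (w : W) :
    pD dW (single k w) = single k (dW w) := by
  simp [pD]

lemma PD_single (dW : W →ₗ[ℂ] W) (i j : ℕ) (w : W) :
    PD dW (single (i, j) w) = single (i, j) (dW w) := by
  simp [PD]

lemma LX_pow_single (k i j : ℕ) (w : W) :
    ((LX : TP W →ₗ[ℂ] TP W) ^ k) (single (i, j) w) = single (i + k, j) w := by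
  induction k with
  | zero => simp
  | succ k ih => rw [end_pow_apply, ih, LX_single, add_assoc]

lemma evA_single (A : TP W →ₗ[ℂ] TP W) (k : ℕ) (w : W) :
    evA A (single k w) = (A ^ k) (single ((0 : ℕ), (0 : ℕ)) w) := by
  simp [evA]

lemma evA_lsh (A : TP W →ₗ[ℂ] TP W) (g : OP W) :
    evA A (lsh g) = A (evA A g) := by
  induction g using Finsupp.induction_linear with
  | zero => simp
  | add f g hf hg => simp [hf, hg]
  | single k w => rw [lsh_single, evA_single, evA_single, end_pow_apply]

lemma LX_PD_comm (dW : W →ₗ[ℂ] W) (p : TP W) :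
    (LX : TP W →ₗ[ℂ] TP W) (PD dW p) = PD dW (LX p) := by
  induction p using Finsupp.induction_linear with
  | zero => simp
  | add f g hf hg => simp [hf, hg]
  | single a w =>
      obtain ⟨i, j⟩ := a
      rw [PD_single, LX_single, LX_single, PD_single]

lemma LY_PD_comm (dW : W →ₗ[ℂ] W) (p : TP W) :
    (LY : TP W →ₗ[ℂ] TP W) (PD dW p) = PD dW (LY p) := by
  induction p using Finsupp.induction_linear with
  | zero => simp
  | add f g hf hg => simp [hf, hg]
  | single a w =>
      obtain ⟨i, j⟩ := a
      rw [PD_single, LY_single, LY_single, PD_single]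

lemma evA_pD (A : TP W →ₗ[ℂ] TP W) (dW : W →ₗ[ℂ] W)
    (hc : ∀ p, A (PD dW p) = PD dW (A p)) (g : OP W) :
    evA A (pD dW g) = PD dW (evA A g) := by
  have hcp : ∀ (k : ℕ) (p : TP W), (A ^ k) (PD dW p) = PD dW ((A ^ k) p) := by
    intro k
    induction k with
    | zero => intro p; simp
    | succ k ih =>
        intro p
        rw [end_pow_apply, ih, hc, end_pow_apply]
  induction g using Finsupp.induction_linear with
  | zero => simp
  | add f g hf hg => simp [hf, hg]
  | single k w =>
      rw [pD_single, evA_single, evA_single,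
        show (single ((0 : ℕ), (0 : ℕ)) (dW w) : TP W)
            = PD dW (single ((0 : ℕ), (0 : ℕ)) w) from (PD_single dW 0 0 w).symm,
        hcp]

variable {U V : Type*} [AddCommGroup U] [Module ℂ U] [AddCommGroup V] [Module ℂ V]

lemma exL_sum (m : U →ₗ[ℂ] V →ₗ[ℂ] OP W) (A : TP W →ₗ[ℂ] TP W) (b : V) (f : ℕ →₀ U) :
    exL m A (f.sum fun k u => single (k, (0 : ℕ)) u) b
      = f.sum fun k u => ((LX : TP W →ₗ[ℂ] TP W) ^ k) (evA A (m u b)) := by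
  unfold exL
  rw [Finsupp.sum_sum_index (by intro a; simp) (by intro a b₁ b₂; simp)]
  refine Finsupp.sum_congr fun k _ => ?_
  rw [Finsupp.sum_single_index (by simp)]
  simp

lemma exR_sum (m : U →ₗ[ℂ] V →ₗ[ℂ] OP W) (A : TP W →ₗ[ℂ] TP W) (u : U) (f : ℕ →₀ V) :
    exR m A u (f.sum fun k v => single (k, (0 : ℕ)) v)
      = f.sum fun k v => ((LX : TP W →ₗ[ℂ] TP W) ^ k) (evA A (m u v)) := by
  unfold exR
  rw [Finsupp.sum_sum_index (by intro a; simp) (by intro a b₁ b₂; simp)]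
  refine Finsupp.sum_congr fun k _ => ?_
  rw [Finsupp.sum_single_index (by simp)]
  simp

/-- `C` as a `ℂ`-linear map. -/
def CL : Polynomial ℂ →ₗ[ℂ] Polynomial (Polynomial ℂ) where
  toFun := Polynomial.C
  map_add' a b := by simp
  map_smul' a p := by simp [Polynomial.smul_C]

/-- Evaluation of a two-variable conformal polynomial: `λ ↦ X` (outer variable),
`μ ↦ v`, coefficients embedded via `C`. -/
def Theta (v : Polynomial (Polynomial ℂ)) :
    TP (Polynomial ℂ) →ₗ[ℂ] Polynomial (Polynomial ℂ) :=
  Finsupp.lsum ℂ fun ij =>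
    LinearMap.mulLeft ℂ ((Polynomial.X : Polynomial (Polynomial ℂ)) ^ ij.1 * v ^ ij.2) ∘ₗ CL

lemma Theta_single (v : Polynomial (Polynomial ℂ)) (i j : ℕ) (P : Polynomial ℂ) :
    Theta v (single (i, j) P) = Polynomial.X ^ i * v ^ j * Polynomial.C P := by
  simp [Theta, CL, mul_assoc]

lemma Theta_LX (v : Polynomial (Polynomial ℂ)) (p : TP (Polynomial ℂ)) :
    Theta v (LX p) = Polynomial.X * Theta v p := by
  induction p using Finsupp.induction_linear with
  | zero => simp
  | add f g hf hg => simp [hf, hg, mul_add]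
  | single a P =>
      obtain ⟨i, j⟩ := a
      rw [LX_single, Theta_single, Theta_single]; ring

lemma Theta_LY (v : Polynomial (Polynomial ℂ)) (p : TP (Polynomial ℂ)) :
    Theta v (LY p) = v * Theta v p := by
  induction p using Finsupp.induction_linear with
  | zero => simp
  | add f g hf hg => simp [hf, hg, mul_add]
  | single a P =>
      obtain ⟨i, j⟩ := a
      rw [LY_single, Theta_single, Theta_single]; ring

lemma Theta_PD (v : Polynomial (Polynomial ℂ)) (p : TP (Polynomial ℂ)) :
    Theta v (PD dC p) = Polynomial.C (Polynomial.X : Polynomial ℂ) * Theta v p := by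
  induction p using Finsupp.induction_linear with
  | zero => simp
  | add f g hf hg => simp [hf, hg, mul_add]
  | single a P =>
      obtain ⟨i, j⟩ := a
      rw [PD_single, Theta_single, Theta_single]
      simp only [dC, LinearMap.mulLeft_apply, map_mul]
      ring

lemma Theta_LX_pow (v : Polynomial (Polynomial ℂ)) (k : ℕ) (p : TP (Polynomial ℂ)) :
    Theta v (((LX : TP (Polynomial ℂ) →ₗ[ℂ] TP (Polynomial ℂ)) ^ k) p)
      = Polynomial.X ^ k * Theta v p := by
  induction k with
  | zero => simp
  | succ k ih => rw [end_pow_apply, Theta_LX, ih]; ring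

lemma aeval_C_X (P : Polynomial ℂ) :
    aeval (Polynomial.C (Polynomial.X : Polynomial ℂ) : Polynomial (Polynomial ℂ)) P
      = Polynomial.C P := by
  induction P using Polynomial.induction_on with
  | C a => simp [Polynomial.algebraMap_apply]
  | add p q hp hq => simp [hp, hq]
  | monomial n a ih =>
      rw [pow_succ, ← mul_assoc, map_mul, ih, aeval_X, ← Polynomial.C_mul]

end VanishAux

set_option maxHeartbeats 2000000

/-- **Proposition 2.11.** Let `R = ℂ[∂]L` be the rank-one free left-symmetric conformal
algebra with `L_λ L = (λ + ∂ + c) L`.  Then every conformal derivation of `R` is zero.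
Here `R` is realised concretely as `ℂ[∂] = Polynomial ℂ` with `L = 1`, so that the
λ-product satisfies `m 1 1 = λ + ∂ + c` (coefficient `1` of `λ¹` and `X + c` of `λ⁰`). -/
theorem conformal_derivations_vanish (c : ℂ)
    (m : Polynomial ℂ →ₗ[ℂ] Polynomial ℂ →ₗ[ℂ] OP (Polynomial ℂ))
    (hm : IsLSCA dC m)
    (hprod : m 1 1 =
      Finsupp.single 1 (1 : Polynomial ℂ) + Finsupp.single 0 (Polynomial.X + Polynomial.C c))
    (D : Polynomial ℂ →ₗ[ℂ] OP (Polynomial ℂ))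
    -- `D` is a conformal linear map: `D_λ(∂a) = (∂+λ) D_λ(a)`
    (hconf : ∀ a, D (dC a) = lsh (D a) + pD dC (D a))
    -- `D` is a conformal derivation: `D_λ(a_μ b) = D_λ(a)_{λ+μ} b + a_μ (D_λ(b))`
    (hder : ∀ a b, exU D LX (ev2 m LY a b)
      = exL m (LX + LY) (evA LX (D a)) b + exR m LY a (evA LX (D b))) :
    D = 0 := by
  classical
  set f : OP (Polynomial ℂ) := D 1 with hfdef
  -- ∂ acts on `ℂ[∂]` as multiplication by `X`
  have hdC : ∀ P q : Polynomial ℂ, (aeval (dC : Module.End ℂ (Polynomial ℂ)) P) q = P * q := by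
    intro P q
    have h1 : (dC : Module.End ℂ (Polynomial ℂ))
        = (Algebra.lmul ℂ (Polynomial ℂ)) (Polynomial.X) := by
      ext r; simp [dC]
    rw [h1, Polynomial.aeval_algHom_apply, Polynomial.aeval_X_left_apply]
    rfl
  -- representation of the λ-products through `aeval`
  have hm1 : ∀ P : Polynomial ℂ,
      m P 1 = (aeval (-lsh : Module.End ℂ (OP (Polynomial ℂ))) P) (m 1 1) := by
    intro P
    have h2 := aeval_intertwine (m.flip (1 : Polynomial ℂ)) (dC : Module.End ℂ (Polynomial ℂ))
      (-lsh : Module.End ℂ (OP (Polynomial ℂ)))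
      (fun v => by simp [LinearMap.flip_apply, hm.conf.dleft v 1]) P 1
    simpa [LinearMap.flip_apply, hdC] using h2
  have hm2 : ∀ P : Polynomial ℂ,
      m 1 P = (aeval (lsh + pD dC : Module.End ℂ (OP (Polynomial ℂ))) P) (m 1 1) := by
    intro P
    have h2 := aeval_intertwine (m 1) (dC : Module.End ℂ (Polynomial ℂ))
      (lsh + pD dC : Module.End ℂ (OP (Polynomial ℂ)))
      (fun v => by simp [hm.conf.dright 1 v]) P 1
    simpa [hdC] using h2
  have hD : ∀ a : Polynomial ℂ,
      D a = (aeval (lsh + pD dC : Module.End ℂ (OP (Polynomial ℂ))) a) (D 1) := by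
    intro a
    have h2 := aeval_intertwine D (dC : Module.End ℂ (Polynomial ℂ))
      (lsh + pD dC : Module.End ℂ (OP (Polynomial ℂ)))
      (fun v => by simp [hconf v]) a 1
    simpa [hdC] using h2
  -- the λ-bracket of the generators, evaluated
  have hev2 : ev2 m LY 1 1
      = single ((0 : ℕ), (1 : ℕ)) (1 : Polynomial ℂ)
        + single (0, 0) (Polynomial.X + Polynomial.C c) := by
    rw [ev2, hprod, map_add, evA_single, evA_single]
    simp only [pow_one, pow_zero, Module.End.one_apply]
    rw [LY_single]
  have hXc : (Polynomial.X + Polynomial.C c : Polynomial ℂ) = dC 1 + c • 1 := by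
    simp [dC, ← Algebra.algebraMap_eq_smul_one, Polynomial.algebraMap_eq]
  have hDXc : D (Polynomial.X + Polynomial.C c) = lsh f + pD dC f + c • f := by
    rw [hXc, map_add, map_smul, hconf 1, ← hfdef]
  -- LHS of the derivation identity
  have hexU : exU D LX (ev2 m LY 1 1)
      = LY (evA LX f) + (LX (evA LX f) + PD dC (evA LX f) + c • evA LX f) := by
    rw [hev2]
    unfold exU
    rw [Finsupp.sum_add_index' (by intro a; simp) (by intro a b₁ b₂; simp)]
    rw [Finsupp.sum_single_index (by simp), Finsupp.sum_single_index (by simp)]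
    simp only [pow_zero, pow_one, Module.End.one_apply]
    rw [hDXc]
    simp only [map_add, map_smul]
    rw [evA_lsh, evA_pD LX dC (fun p => LX_PD_comm dC p), ← hfdef]
  -- expansion of `evA LX f`
  have hEXP : evA LX f = f.sum fun k P => single (k, (0 : ℕ)) P := by
    rw [evA, Finsupp.lsum_apply]
    refine Finsupp.sum_congr fun k _ => ?_
    rw [LinearMap.comp_apply, Finsupp.lsingle_apply, LX_pow_single, zero_add]
  -- RHS of the derivation identity, term by term
  have hterm1 : exL m (LX + LY) (evA LX f) 1
      = f.sum fun k P => ((LX : TP (Polynomial ℂ) →ₗ[ℂ] TP (Polynomial ℂ)) ^ k)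
          ((aeval (-(LX + LY) : Module.End ℂ (TP (Polynomial ℂ))) P)
            (evA (LX + LY) (m 1 1))) := by
    rw [hEXP, exL_sum]
    refine Finsupp.sum_congr fun k _ => ?_
    congr 1
    rw [hm1]
    exact aeval_intertwine (evA (LX + LY)) (-lsh : Module.End ℂ (OP (Polynomial ℂ)))
      (-(LX + LY) : Module.End ℂ (TP (Polynomial ℂ)))
      (fun q => by simp [LinearMap.neg_apply, evA_lsh]) _ _
  have hterm2 : exR m LY 1 (evA LX f)
      = f.sum fun k P => ((LX : TP (Polynomial ℂ) →ₗ[ℂ] TP (Polynomial ℂ)) ^ k)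
          ((aeval (LY + PD dC : Module.End ℂ (TP (Polynomial ℂ))) P)
            (evA LY (m 1 1))) := by
    rw [hEXP, exR_sum]
    refine Finsupp.sum_congr fun k _ => ?_
    congr 1
    rw [hm2]
    exact aeval_intertwine (evA LY) (lsh + pD dC : Module.End ℂ (OP (Polynomial ℂ)))
      (LY + PD dC : Module.End ℂ (TP (Polynomial ℂ)))
      (fun q => by
        simp [LinearMap.add_apply, evA_lsh, evA_pD LY dC (fun p => LY_PD_comm dC p)]) _ _
  -- the derivation identity, assembled
  have key : LY (evA LX f) + (LX (evA LX f) + PD dC (evA LX f) + c • evA LX f)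
      = (f.sum fun k P => ((LX : TP (Polynomial ℂ) →ₗ[ℂ] TP (Polynomial ℂ)) ^ k)
          ((aeval (-(LX + LY) : Module.End ℂ (TP (Polynomial ℂ))) P)
            (evA (LX + LY) (m 1 1))))
        + f.sum fun k P => ((LX : TP (Polynomial ℂ) →ₗ[ℂ] TP (Polynomial ℂ)) ^ k)
          ((aeval (LY + PD dC : Module.End ℂ (TP (Polynomial ℂ))) P)
            (evA LY (m 1 1))) := by
    rw [← hexU, ← hterm1, ← hterm2]
    exact hder 1 1
  -- evaluations of the structure polynomials
  have hM : evA (LX + LY) (m 1 1)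
      = (LX + LY : TP (Polynomial ℂ) →ₗ[ℂ] TP (Polynomial ℂ))
          (single ((0 : ℕ), (0 : ℕ)) (1 : Polynomial ℂ))
        + single (0, 0) (Polynomial.X + Polynomial.C c) := by
    rw [hprod, map_add, evA_single, evA_single]
    simp only [pow_one, pow_zero, Module.End.one_apply]
  have hMY : evA LY (m 1 1)
      = LY (single ((0 : ℕ), (0 : ℕ)) (1 : Polynomial ℂ))
        + single (0, 0) (Polynomial.X + Polynomial.C c) := by
    rw [hprod, map_add, evA_single, evA_single]
    simp only [pow_one, pow_zero, Module.End.one_apply]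
  have hκ : ∀ t : Polynomial (Polynomial ℂ),
      c • t = Polynomial.C (Polynomial.C c) * t := by
    intro t
    have halg : (algebraMap ℂ (Polynomial (Polynomial ℂ))) c
        = Polynomial.C (Polynomial.C c) := by
      simp [Polynomial.algebraMap_apply]
    rw [Algebra.smul_def, halg]
  -- apply `Theta v`
  have keyv : ∀ v : Polynomial (Polynomial ℂ),
      (v + Polynomial.X + Polynomial.C (Polynomial.X : Polynomial ℂ)
          + Polynomial.C (Polynomial.C c)) * (f.sum fun k P => Polynomial.X ^ k * Polynomial.C P)
        = (f.sum fun k P => Polynomial.X ^ k * (aeval (-(Polynomial.X + v)) P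
            * (Polynomial.X + v + Polynomial.C (Polynomial.X : Polynomial ℂ)
              + Polynomial.C (Polynomial.C c))))
          + f.sum fun k P => Polynomial.X ^ k
              * (aeval (v + Polynomial.C (Polynomial.X : Polynomial ℂ)) P
                * (v + Polynomial.C (Polynomial.X : Polynomial ℂ)
                  + Polynomial.C (Polynomial.C c))) := by
    intro v
    have hTE : Theta v (evA LX f) = f.sum fun k P => Polynomial.X ^ k * Polynomial.C P := by
      rw [hEXP, map_finsuppSum]
      refine Finsupp.sum_congr fun k _ => ?_
      rw [Theta_single]; ring
    have hMAv : Theta v (evA (LX + LY) (m 1 1))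
        = Polynomial.X + v + Polynomial.C (Polynomial.X : Polynomial ℂ)
          + Polynomial.C (Polynomial.C c) := by
      rw [hM]
      simp only [map_add, LinearMap.add_apply, Theta_LX, Theta_LY, Theta_single, pow_zero,
        mul_one, one_mul, map_one]
      ring
    have hMBv : Theta v (evA LY (m 1 1))
        = v + Polynomial.C (Polynomial.X : Polynomial ℂ) + Polynomial.C (Polynomial.C c) := by
      rw [hMY]
      simp only [map_add, Theta_LY, Theta_single, pow_zero, mul_one, one_mul, map_one]
      ring
    have hs1 : (f.sum fun k P => Theta v
          (((LX : TP (Polynomial ℂ) →ₗ[ℂ] TP (Polynomial ℂ)) ^ k)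
            ((aeval (-(LX + LY) : Module.End ℂ (TP (Polynomial ℂ))) P)
              (evA (LX + LY) (m 1 1)))))
        = f.sum fun k P => Polynomial.X ^ k * (aeval (-(Polynomial.X + v)) P
            * (Polynomial.X + v + Polynomial.C (Polynomial.X : Polynomial ℂ)
              + Polynomial.C (Polynomial.C c))) := by
      refine Finsupp.sum_congr fun k _ => ?_
      rw [Theta_LX_pow,
        aeval_mul_intertwine (Theta v) (-(LX + LY) : Module.End ℂ (TP (Polynomial ℂ)))
          (-(Polynomial.X + v))
          (fun w => by
            simp only [LinearMap.neg_apply, LinearMap.add_apply, map_neg, map_add,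
              Theta_LX, Theta_LY]
            ring),
        hMAv]
    have hs2 : (f.sum fun k P => Theta v
          (((LX : TP (Polynomial ℂ) →ₗ[ℂ] TP (Polynomial ℂ)) ^ k)
            ((aeval (LY + PD dC : Module.End ℂ (TP (Polynomial ℂ))) P)
              (evA LY (m 1 1)))))
        = f.sum fun k P => Polynomial.X ^ k
            * (aeval (v + Polynomial.C (Polynomial.X : Polynomial ℂ)) P
              * (v + Polynomial.C (Polynomial.X : Polynomial ℂ)
                + Polynomial.C (Polynomial.C c))) := by
      refine Finsupp.sum_congr fun k _ => ?_
      rw [Theta_LX_pow,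
        aeval_mul_intertwine (Theta v) (LY + PD dC : Module.End ℂ (TP (Polynomial ℂ)))
          (v + Polynomial.C (Polynomial.X : Polynomial ℂ))
          (fun w => by
            simp only [LinearMap.add_apply, map_add, Theta_LY, Theta_PD]
            ring),
        hMBv]
    have h := congrArg (Theta v) key
    simp only [map_add, map_smul, map_finsuppSum] at h
    rw [Theta_LY, Theta_LX, Theta_PD, hTE, hs1, hs2, hκ] at h
    linear_combination h
  -- abbreviations
  set κ : Polynomial (Polynomial ℂ) := Polynomial.C (Polynomial.C c) with hκdef
  set ξ : Polynomial (Polynomial ℂ) := Polynomial.C (Polynomial.X : Polynomial ℂ) with hξdef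
  set Ef : Polynomial (Polynomial ℂ) := f.sum fun k P => Polynomial.X ^ k * Polynomial.C P with hEfdef
  set G : Polynomial (Polynomial ℂ) := f.sum fun k P => Polynomial.X ^ k * aeval (-Polynomial.X : Polynomial (Polynomial ℂ)) P with hGdef
  -- substitution μ = −λ−∂
  have hG0 : G = 0 := by
    have h := keyv (-(Polynomial.X + ξ))
    have e1 : (-(Polynomial.X + -(Polynomial.X + ξ)) : Polynomial (Polynomial ℂ)) = ξ := by ring
    have e2 : (-(Polynomial.X + ξ) + ξ : Polynomial (Polynomial ℂ)) = -Polynomial.X := by ring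
    rw [e1, e2] at h
    have hA : (f.sum fun k P => Polynomial.X ^ k * (aeval (ξ : Polynomial (Polynomial ℂ)) P
          * (Polynomial.X + -(Polynomial.X + ξ) + ξ + κ))) = κ * Ef := by
      rw [hEfdef, Finsupp.mul_sum]
      refine Finsupp.sum_congr fun k _ => ?_
      rw [hξdef, aeval_C_X]
      ring
    have hB : (f.sum fun k P => Polynomial.X ^ k * (aeval (-Polynomial.X : Polynomial (Polynomial ℂ)) P
          * (-Polynomial.X + κ))) = (κ - Polynomial.X) * G := by
      rw [hGdef, Finsupp.mul_sum]
      refine Finsupp.sum_congr fun k _ => ?_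
      ring
    rw [hA, hB] at h
    have h2 : (κ - Polynomial.X) * G = 0 := by linear_combination - h
    rcases mul_eq_zero.mp h2 with h3 | h3
    · exfalso
      have h4 : (κ - Polynomial.X : Polynomial (Polynomial ℂ)).coeff 1 = 0 := by rw [h3]; simp
      rw [hκdef] at h4
      simp [Polynomial.coeff_sub, Polynomial.coeff_C, Polynomial.coeff_X] at h4
    · exact h3
  -- substitution μ = 0
  have hEf0 : Ef = 0 := by
    have h := keyv 0
    have e1 : (-(Polynomial.X + 0) : Polynomial (Polynomial ℂ)) = -Polynomial.X := by ring
    have e2 : ((0 : Polynomial (Polynomial ℂ)) + ξ) = ξ := by ring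
    rw [e1, e2] at h
    have hA : (f.sum fun k P => Polynomial.X ^ k * (aeval (-Polynomial.X : Polynomial (Polynomial ℂ)) P
          * (Polynomial.X + 0 + ξ + κ))) = (Polynomial.X + ξ + κ) * G := by
      rw [hGdef, Finsupp.mul_sum]
      refine Finsupp.sum_congr fun k _ => ?_
      ring
    have hB : (f.sum fun k P => Polynomial.X ^ k * (aeval (ξ : Polynomial (Polynomial ℂ)) P * (ξ + κ)))
        = (ξ + κ) * Ef := by
      rw [hEfdef, Finsupp.mul_sum]
      refine Finsupp.sum_congr fun k _ => ?_
      rw [hξdef, aeval_C_X]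
      ring
    rw [hA, hB, hG0, mul_zero] at h
    have h2 : (Polynomial.X : Polynomial (Polynomial ℂ)) * Ef = 0 := by linear_combination h
    rcases mul_eq_zero.mp h2 with h3 | h3
    · exact absurd h3 Polynomial.X_ne_zero
    · exact h3
  -- conclude `f = 0`
  have hf0 : f = 0 := by
    refine Finsupp.ext fun k => ?_
    have h2 : (f.sum fun k' P => (Polynomial.X : Polynomial (Polynomial ℂ)) ^ k' * Polynomial.C P).coeff k = f k := by
      have hmono : ∀ (k' : ℕ) (P : Polynomial ℂ),
          (Polynomial.X : Polynomial (Polynomial ℂ)) ^ k' * Polynomial.C P = Polynomial.monomial k' P := by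
        intro k' P
        rw [mul_comm, Polynomial.C_mul_X_pow_eq_monomial]
      simp only [hmono]
      rw [show (f.sum fun k' P => (Polynomial.monomial k' P : Polynomial (Polynomial ℂ))).coeff k
            = f.sum fun k' P => (Polynomial.monomial k' P : Polynomial (Polynomial ℂ)).coeff k from
          map_finsuppSum (Polynomial.lcoeff (Polynomial ℂ) k) f _]
      simp only [Polynomial.coeff_monomial]
      rw [Finsupp.sum_ite_eq' f k fun _ v => v]
      split
      · rfl
      · exact (Finsupp.notMem_support_iff.mp (by assumption)).symm
    rw [hEfdef] at hEf0
    rw [hEf0] at h2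
    simpa using h2.symm
  refine LinearMap.ext fun a => ?_
  rw [hD a, ← hfdef, hf0]
  simp
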